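/- Let C be a uniform clutter (all edges of C have the same cardinality) with characteristic vectors v_1,...,v_s, and let X be the algebraic toric set parameterized by the monomials of the edges of C over F_q with q ≥ 3. If the vanishing ideal I(X) is a complete intersection, then the vectors v_1,...,v_s are linearly independent over the rationals. -/

import Mathlib

set_option linter.unusedSectionVars false


noncomputable section

open scoped BigOperators

/-- The vanishing ideal `I(Y)` of a set `Y` of points in projective space: the ideal
generated by the homogeneous polynomials vanishing at every point of `Y`. -/
def vanishingIdeal (K : Type*) [Field K] {s : ℕ}
    (Y : Set (Projectivization K (Fin s → K))) : Ideal (MvPolynomial (Fin s) K) :=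
  Ideal.span {f | (∃ d, f.IsHomogeneous d) ∧ ∀ P ∈ Y, MvPolynomial.eval P.rep f = 0}

/-- The Hilbert function `d ↦ dim_K (S/I)_d` of the standard graded quotient `S/I`. -/
def hilbertFunction {K : Type*} [Field K] {s : ℕ}
    (I : Ideal (MvPolynomial (Fin s) K)) (d : ℕ) : ℕ :=
  Module.finrank K ((MvPolynomial.homogeneousSubmodule (Fin s) K d).map
    (Ideal.Quotient.mkₐ K I).toLinearMap)

/-- The index of regularity of `S/I(Y)`: the least `p ≥ 0` such that
`H_Y(d) = |Y|` for all `d ≥ p`. -/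
def regIndex {K : Type*} [Field K] {s : ℕ}
    (Y : Set (Projectivization K (Fin s → K))) : ℕ :=
  sInf {p : ℕ | ∀ d, p ≤ d → hilbertFunction (vanishingIdeal K Y) d = Y.ncard}

/-- The algebraic toric set in `P^{s-1}` parameterized by the monomials `y^{v_1},…,y^{v_s}`. -/
def toricSet (K : Type*) [Field K] {n s : ℕ} (v : Fin s → Fin n → ℕ) :
    Set (Projectivization K (Fin s → K)) :=
  {P | ∃ x : Fin n → K, (∀ j, x j ≠ 0) ∧
      ∃ h : (fun i : Fin s => ∏ j, x j ^ v i j) ≠ 0,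
        P = Projectivization.mk K (fun i : Fin s => ∏ j, x j ^ v i j) h}

/-- The projective torus in `P^{s-1}`: the points all of whose coordinates are nonzero. -/
def projTorus (K : Type*) [Field K] (s : ℕ) : Set (Projectivization K (Fin s → K)) :=
  {P | ∀ i, P.rep i ≠ 0}

/-- The parameterized (evaluation) code `C_Y(d)`: the image of the degree-`d` evaluation map
`f ↦ (f(P)/t_1^d(P))_{P ∈ Y}`. -/
def evalCode (K : Type*) [Field K] {s : ℕ} [NeZero s]
    (Y : Set (Projectivization K (Fin s → K))) (d : ℕ) : Set (Y → K) :=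
  {w | ∃ f ∈ MvPolynomial.homogeneousSubmodule (Fin s) K d,
      w = fun P : Y => MvPolynomial.eval (P : Projectivization K (Fin s → K)).rep f /
        ((P : Projectivization K (Fin s → K)).rep 0) ^ d}

/-- The minimum distance of a code: the least number of nonzero entries of a
nonzero codeword. -/
def minDist {K : Type*} [Field K] {ι : Type*} (C : Set (ι → K)) : ℕ :=
  sInf {m | ∃ w ∈ C, w ≠ 0 ∧ m = {i | w i ≠ 0}.ncard}

/-- `v 1,…,v s` are the characteristic vectors of the edges of a clutter: all the entries
are in `{0,1}` and no edge (support) is contained in another. -/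
def IsClutter {n s : ℕ} (v : Fin s → Fin n → ℕ) : Prop :=
  (∀ i j, v i j ≤ 1) ∧ ∀ i k : Fin s, i ≠ k → ∃ j, v i j ≠ 0 ∧ v k j = 0

/-- An ideal of `K[t_1,…,t_s]` is a complete intersection if it can be generated by `s-1`
homogeneous polynomials. -/
def IsCompleteIntersection {K : Type*} [Field K] {s : ℕ}
    (I : Ideal (MvPolynomial (Fin s) K)) : Prop :=
  ∃ g : Fin (s - 1) → MvPolynomial (Fin s) K,
    (∀ i, ∃ d, (g i).IsHomogeneous d) ∧ Ideal.span (Set.range g) = I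

end

/- ---------------------------------------------------------------------------
Auxiliary material for the proof of `stmt9`.
--------------------------------------------------------------------------- -/

noncomputable section Stmt9Aux

open MvPolynomial

namespace Stmt9Aux

variable {K : Type*} [Field K] [Fintype K] {n s q : ℕ}

/-- The vector of coordinates `x^{v_i}`. -/
def wv (v : Fin s → Fin n → ℕ) (x : Fin n → K) : Fin s → K := fun i => ∏ j, x j ^ v i j

lemma wv_apply_ne_zero {v : Fin s → Fin n → ℕ} {x : Fin n → K} (hx : ∀ j, x j ≠ 0) (i : Fin s) :
    wv v x i ≠ 0 :=
  Finset.prod_ne_zero_iff.mpr fun j _ => pow_ne_zero _ (hx j)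

lemma wv_ne_zero {v : Fin s → Fin n → ℕ} {x : Fin n → K} (hx : ∀ j, x j ≠ 0) (hs : 0 < s) :
    wv v x ≠ 0 := fun h => wv_apply_ne_zero hx ⟨0, hs⟩ (congrFun h ⟨0, hs⟩)

lemma mk_wv_mem {v : Fin s → Fin n → ℕ} {x : Fin n → K} (hx : ∀ j, x j ≠ 0) (hs : 0 < s) :
    Projectivization.mk K (wv v x) (wv_ne_zero hx hs) ∈ toricSet K v :=
  ⟨x, hx, wv_ne_zero hx hs, rfl⟩

/-- sum of the exponents of a monomial of a homogeneous polynomial -/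
lemma sum_eq_of_isHomogeneous {f : MvPolynomial (Fin s) K} {d : ℕ}
    (hf : f.IsHomogeneous d) {a : Fin s →₀ ℕ} (ha : a ∈ f.support) :
    ∑ i, a i = d := by
  have h1 : a.degree = d := by
    have := hf (mem_support_iff.mp ha)
    rwa [Finsupp.degree_eq_weight_one]
  rw [← h1, Finsupp.degree]
  exact (Finset.sum_subset (Finset.subset_univ _)
    (fun i _ hi => Finsupp.notMem_support_iff.mp hi)).symm

lemma eval_smul_of_isHomogeneous {f : MvPolynomial (Fin s) K} {d : ℕ}
    (hf : f.IsHomogeneous d) (c : K) (y : Fin s → K) :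
    eval (c • y) f = c ^ d * eval y f := by
  rw [eval_eq', eval_eq', Finset.mul_sum]
  refine Finset.sum_congr rfl fun a ha => ?_
  have hdeg : ∑ i, a i = d := sum_eq_of_isHomogeneous hf ha
  have h2 : ∏ i, (c • y) i ^ a i = c ^ d * ∏ i, y i ^ a i := by
    simp only [Pi.smul_apply, smul_eq_mul, mul_pow]
    rw [Finset.prod_mul_distrib, Finset.prod_pow_eq_pow_sum, hdeg]
  rw [h2]; ring

lemma eval_rep_eq_zero_of_mem {Y : Set (Projectivization K (Fin s → K))}
    {f : MvPolynomial (Fin s) K} (hf : f ∈ vanishingIdeal K Y)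
    {P : Projectivization K (Fin s → K)} (hP : P ∈ Y) : eval P.rep f = 0 := by
  have h : vanishingIdeal K Y ≤ RingHom.ker (eval P.rep) := by
    unfold _root_.vanishingIdeal
    rw [Ideal.span_le]
    intro g hg
    exact RingHom.mem_ker.mpr (hg.2 P hP)
  exact h hf

lemma units_smul_eq (μ : Kˣ) (w : Fin s → K) : μ • w = (μ : K) • w := by
  funext i
  simp [Units.smul_def]

lemma mem_vanishingIdeal_of_eval_wv {v : Fin s → Fin n → ℕ} (hs : 0 < s)
    {f : MvPolynomial (Fin s) K} {d : ℕ} (hf : f.IsHomogeneous d)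
    (hvan : ∀ x : Fin n → K, (∀ j, x j ≠ 0) → eval (wv v x) f = 0) :
    f ∈ vanishingIdeal K (toricSet K v) := by
  unfold _root_.vanishingIdeal
  apply Ideal.subset_span
  refine ⟨⟨d, hf⟩, ?_⟩
  rintro P ⟨x, hx, hne, rfl⟩
  obtain ⟨μ, hμ⟩ := (Projectivization.mk_eq_mk_iff K _ _ (Projectivization.rep_nonzero _)
    hne).mp (Projectivization.mk_rep _)
  rw [← hμ, units_smul_eq, eval_smul_of_isHomogeneous hf]
  show (μ : K) ^ d * eval (wv v x) f = 0
  rw [hvan x hx, mul_zero]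

lemma eval_wv_eq_zero_of_mem {v : Fin s → Fin n → ℕ} (hs : 0 < s)
    {f : MvPolynomial (Fin s) K} {d : ℕ} (hf : f.IsHomogeneous d)
    (hmem : f ∈ vanishingIdeal K (toricSet K v)) {x : Fin n → K} (hx : ∀ j, x j ≠ 0) :
    eval (wv v x) f = 0 := by
  have h0 := eval_rep_eq_zero_of_mem hmem (mk_wv_mem hx hs)
  obtain ⟨μ, hμ⟩ := (Projectivization.mk_eq_mk_iff K _ _ (Projectivization.rep_nonzero _)
    (wv_ne_zero hx hs)).mp (Projectivization.mk_rep (Projectivization.mk K (wv v x)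
      (wv_ne_zero hx hs)))
  rw [← hμ, units_smul_eq, eval_smul_of_isHomogeneous hf] at h0
  rcases mul_eq_zero.mp h0 with h | h
  · exact absurd h (pow_ne_zero _ μ.ne_zero)
  · exact h

/-- exchanging a double product of powers -/
lemma prod_prod_pow {M : Type*} [CommMonoid M] (x : Fin n → M) (v : Fin s → Fin n → ℕ)
    (e : Fin s → ℕ) :
    ∏ i, (∏ j, x j ^ v i j) ^ e i = ∏ j, x j ^ ∑ i, e i * v i j := by
  have h1 : ∀ i, (∏ j, x j ^ v i j) ^ e i = ∏ j, x j ^ (e i * v i j) := by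
    intro i
    rw [← Finset.prod_pow]
    exact Finset.prod_congr rfl fun j _ => by rw [← pow_mul, mul_comm (v i j)]
  rw [Finset.prod_congr rfl fun i _ => h1 i, Finset.prod_comm]
  exact Finset.prod_congr rfl fun j _ => Finset.prod_pow_eq_pow_sum _ _ _

lemma finsupp_prod_pow_univ {M : Type*} [CommMonoid M] (y : Fin s → M) (a : Fin s →₀ ℕ) :
    (a.prod fun i k => y i ^ k) = ∏ i, y i ^ a i := by
  rw [Finsupp.prod]
  exact Finset.prod_subset (Finset.subset_univ _)
    (fun i _ hi => by rw [Finsupp.notMem_support_iff.mp hi, pow_zero])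

lemma degree_equivFunOnFinite_symm (c : Fin s → ℕ) :
    (Finsupp.equivFunOnFinite.symm c).degree = ∑ i, c i := by
  rw [Finsupp.degree]
  refine (Finset.sum_subset (Finset.subset_univ _)
    (fun i _ hi => Finsupp.notMem_support_iff.mp hi)).trans ?_
  exact Finset.sum_congr rfl fun i _ => rfl

lemma eval_monomial_symm (y : Fin s → K) (c : Fin s → ℕ) :
    eval y (monomial (Finsupp.equivFunOnFinite.symm c) (1 : K)) = ∏ i, y i ^ c i := by
  rw [eval_monomial, one_mul, finsupp_prod_pow_univ]
  exact Finset.prod_congr rfl fun i _ => rfl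

lemma prod_X_pow_univ (E : Fin n → ℕ) :
    (∏ j, (X j : MvPolynomial (Fin n) K) ^ E j) =
      monomial (Finsupp.equivFunOnFinite.symm E) 1 := by
  calc ∏ j, (X j : MvPolynomial (Fin n) K) ^ E j
      = ∏ j, (X j : MvPolynomial (Fin n) K) ^ ((Finsupp.equivFunOnFinite.symm E) j) :=
        Finset.prod_congr rfl fun j _ => rfl
    _ = ∏ j ∈ (Finsupp.equivFunOnFinite.symm E).support,
          (X j : MvPolynomial (Fin n) K) ^ ((Finsupp.equivFunOnFinite.symm E) j) :=
        (Finset.prod_subset (Finset.subset_univ _) (fun j _ hj => by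
          rw [Finsupp.notMem_support_iff.mp hj, pow_zero])).symm
    _ = monomial (Finsupp.equivFunOnFinite.symm E) 1 := prod_X_pow_eq_monomial

/-- the substitution `t_i ↦ y^{v_i}` -/
def YY (K : Type*) [Field K] {n s : ℕ} (v : Fin s → Fin n → ℕ) :
    Fin s → MvPolynomial (Fin n) K := fun i => ∏ j, (X j) ^ v i j

lemma aeval_YY_monomial (v : Fin s → Fin n → ℕ) (a : Fin s →₀ ℕ) (c : K) :
    aeval (YY K v) (monomial a c) =
      monomial (Finsupp.equivFunOnFinite.symm fun j => ∑ i, a i * v i j) c := by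
  rw [aeval_monomial]
  have h1 : (a.prod fun i k => YY K v i ^ k) = ∏ i, (YY K v i) ^ a i :=
    finsupp_prod_pow_univ _ _
  rw [h1]
  have h2 : ∏ i, (YY K v i) ^ a i =
      (∏ j, (X j : MvPolynomial (Fin n) K) ^ ∑ i, a i * v i j) := by
    exact prod_prod_pow _ _ _
  rw [h2, prod_X_pow_univ, algebraMap_eq, C_mul_monomial, mul_one]

lemma eval_aeval' (y : Fin n → K) (g : Fin s → MvPolynomial (Fin n) K)
    (f : MvPolynomial (Fin s) K) :
    eval y (aeval g f) = eval (fun i => eval y (g i)) f := by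
  induction f using MvPolynomial.induction_on with
  | C a => simp
  | add p r hp hr => rw [map_add, map_add, map_add, hp, hr]
  | mul_X p i hp => rw [map_mul, map_mul, hp, aeval_X, map_mul, eval_X]

/-- the character attached to an exponent vector -/
def charOf (K : Type*) [Field K] {n : ℕ} (A : Fin n →₀ ℕ) : (Fin n → Kˣ) →* K where
  toFun x := ∏ j, (x j : K) ^ A j
  map_one' := by simp
  map_mul' x y := by
    simp only [Pi.mul_apply, Units.val_mul, mul_pow]
    rw [Finset.prod_mul_distrib]

lemma charOf_ne (hq : Fintype.card K = q) {d : ℕ} (hd : d < q - 1)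
    {A B : Fin n →₀ ℕ} (hA : ∀ j, A j ≤ d) (hB : ∀ j, B j ≤ d) (hne : A ≠ B) :
    charOf K A ≠ charOf K B := by
  obtain ⟨j, hj⟩ : ∃ j, A j ≠ B j := by
    by_contra h
    push_neg at h
    exact hne (Finsupp.ext h)
  obtain ⟨ζ, hζ⟩ := IsCyclic.exists_generator (α := Kˣ)
  have horder : orderOf ζ = q - 1 := by
    classical
    rw [orderOf_eq_card_of_forall_mem_zpowers hζ, Nat.card_eq_fintype_card,
      Fintype.card_units, hq]
  intro hEq
  set xx : Fin n → Kˣ := Function.update (fun _ => 1) j ζ with hxx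
  have hval : ∀ (C : Fin n →₀ ℕ), charOf K C xx = ((ζ : K)) ^ C j := by
    intro C
    show (∏ j', (xx j' : K) ^ C j') = _
    rw [Finset.prod_eq_single j]
    · rw [hxx]; simp
    · intro b _ hb
      rw [hxx]; simp [Function.update_of_ne hb]
    · intro h; exact absurd (Finset.mem_univ j) h
  have h1 : ((ζ : K)) ^ A j = ((ζ : K)) ^ B j := by
    rw [← hval A, ← hval B, hEq]
  have h2 : ζ ^ A j = ζ ^ B j := by
    apply Units.ext
    push_cast
    exact h1
  have hmem1 : A j ∈ Set.Iio (orderOf ζ) := by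
    rw [Set.mem_Iio, horder]
    exact lt_of_le_of_lt (hA j) hd
  have hmem2 : B j ∈ Set.Iio (orderOf ζ) := by
    rw [Set.mem_Iio, horder]
    exact lt_of_le_of_lt (hB j) hd
  exact hj (pow_injOn_Iio_orderOf hmem1 hmem2 h2)

/-- Dedekind's theorem: a homogeneous polynomial of low degree vanishing on the toric set
is killed by the substitution `t_i ↦ y^{v_i}`. -/
lemma aeval_YY_eq_zero (hq : Fintype.card K = q) {v : Fin s → Fin n → ℕ}
    (hv1 : ∀ i j, v i j ≤ 1) {f : MvPolynomial (Fin s) K} {d : ℕ}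
    (hd : d < q - 1) (hf : f.IsHomogeneous d)
    (hvan : ∀ x : Fin n → K, (∀ j, x j ≠ 0) → eval (wv v x) f = 0) :
    aeval (YY K v) f = 0 := by
  classical
  set F := aeval (YY K v) f with hF
  -- support bound
  have hsupp : ∀ A ∈ F.support, ∀ j, A j ≤ d := by
    intro A hA j
    have hcoeff : coeff A F ≠ 0 := mem_support_iff.mp hA
    have hFsum : F = ∑ a ∈ f.support,
        monomial (Finsupp.equivFunOnFinite.symm fun j => ∑ i, a i * v i j) (coeff a f) := by
      conv_lhs => rw [hF, ← support_sum_monomial_coeff f, map_sum]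
      exact Finset.sum_congr rfl fun a _ => aeval_YY_monomial v a _
    rw [hFsum, coeff_sum] at hcoeff
    obtain ⟨a, ha, hane⟩ := Finset.exists_ne_zero_of_sum_ne_zero hcoeff
    rw [coeff_monomial] at hane
    have hAa : (Finsupp.equivFunOnFinite.symm fun j => ∑ i, a i * v i j) = A := by
      by_contra hcon
      rw [if_neg hcon] at hane
      exact hane rfl
    have hAj : A j = ∑ i, a i * v i j := by
      rw [← hAa]; rfl
    rw [hAj]
    calc ∑ i, a i * v i j ≤ ∑ i, a i * 1 :=
          Finset.sum_le_sum fun i _ => Nat.mul_le_mul_left _ (hv1 i j)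
    _ = ∑ i, a i := by simp
    _ = d := sum_eq_of_isHomogeneous hf ha
  -- vanishing as a function on the torus
  have hvanF : ∀ x : Fin n → Kˣ, eval (fun j => (x j : K)) F = 0 := by
    intro x
    rw [hF, eval_aeval']
    have h1 : (fun i => eval (fun j => (x j : K)) (YY K v i)) = wv v fun j => (x j : K) := by
      funext i
      simp [YY, wv]
    rw [h1]
    exact hvan _ fun j => (x j).ne_zero
  -- characters indexed by the support
  have hinj : Function.Injective fun A : {A // A ∈ F.support} => charOf K A.1 := by
    intro A B hAB
    by_contra hAB'
    exact charOf_ne hq hd (hsupp A.1 A.2) (hsupp B.1 B.2)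
      (fun h => hAB' (Subtype.ext h)) hAB
  have hli : LinearIndependent K
      fun A : {A // A ∈ F.support} => ((charOf K A.1 : (Fin n → Kˣ) → K)) :=
    (linearIndependent_monoidHom (Fin n → Kˣ) K).comp _ hinj
  have hzero : ∑ A : {A // A ∈ F.support},
      (coeff A.1 F) • ((charOf K A.1 : (Fin n → Kˣ) → K)) = 0 := by
    funext x
    rw [Finset.sum_apply]
    have h2 : ∀ A : {A // A ∈ F.support},
        ((coeff A.1 F) • ((charOf K A.1 : (Fin n → Kˣ) → K))) x =
          coeff A.1 F * ∏ j, (x j : K) ^ A.1 j := by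
      intro A
      simp [charOf]
    rw [Finset.sum_congr rfl fun A _ => h2 A]
    have h3 := hvanF x
    rw [eval_eq'] at h3
    rw [← Finset.sum_attach F.support fun a => coeff a F * ∏ j, (x j : K) ^ a j] at h3
    simpa using h3
  have hcoeffs := Fintype.linearIndependent_iff.mp hli (fun A => coeff A.1 F) hzero
  ext A
  rw [coeff_zero]
  by_cases h : A ∈ F.support
  · exact hcoeffs ⟨A, h⟩
  · exact notMem_support_iff.mp h

/-- extraction of the degree-`m` homogeneous component of a multiple of a homogeneous
polynomial -/
lemma homogeneousComponent_mul_isHomogeneous {g : MvPolynomial (Fin s) K} {e : ℕ}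
    (hg : g.IsHomogeneous e) (h : MvPolynomial (Fin s) K) (m : ℕ) :
    homogeneousComponent m (h * g) =
      if e ≤ m then homogeneousComponent (m - e) h * g else 0 := by
  conv_lhs => rw [← sum_homogeneousComponent h, Finset.sum_mul, map_sum]
  have hterm : ∀ i, homogeneousComponent m (homogeneousComponent i h * g) =
      if i + e = m then homogeneousComponent i h * g else 0 := by
    intro i
    have hhom : (homogeneousComponent i h * g).IsHomogeneous (i + e) :=
      (homogeneousComponent_isHomogeneous i h).mul hg
    rw [homogeneousComponent_of_mem ((mem_homogeneousSubmodule _ _).mpr hhom)]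
    by_cases hc : i + e = m
    · rw [if_pos hc.symm, if_pos hc]
    · rw [if_neg (Ne.symm hc), if_neg hc]
  rw [Finset.sum_congr rfl fun i _ => hterm i]
  by_cases hem : e ≤ m
  · rw [if_pos hem]
    rw [Finset.sum_eq_single (m - e)]
    · rw [if_pos (by omega)]
    · intro i _ hi
      rw [if_neg (by omega)]
    · intro hnot
      rw [if_pos (by omega)]
      rw [homogeneousComponent_eq_zero, zero_mul]
      simp only [Finset.mem_range, not_lt] at hnot
      omega
  · rw [if_neg hem]
    exact Finset.sum_eq_zero fun i _ => if_neg (by omega)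

/- ------------------------- the `σ` functional ------------------------- -/

/-- class of an exponent vector modulo `m` -/
def clsv (m : ℕ) (a : Fin s →₀ ℕ) : Fin s → ZMod m := fun i => (a i : ZMod m)

lemma clsv_add (m : ℕ) (a b : Fin s →₀ ℕ) :
    clsv m (a + b) = clsv m a + clsv m b := by
  funext i
  simp [clsv]

/-- "sum of the coefficients over the monomials in a fixed class mod `m`" -/
def sig (m : ℕ) (κ : Fin s → ZMod m) (f : MvPolynomial (Fin s) K) : K :=
  ∑ a ∈ f.support, if clsv m a = κ then coeff a f else 0

lemma sig_eq_sum_subset (m : ℕ) (κ : Fin s → ZMod m) {f : MvPolynomial (Fin s) K}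
    {U : Finset (Fin s →₀ ℕ)} (hU : f.support ⊆ U) :
    sig m κ f = ∑ a ∈ U, if clsv m a = κ then coeff a f else 0 := by
  refine Finset.sum_subset hU fun a _ ha => ?_
  rw [notMem_support_iff.mp ha]
  simp

lemma sig_add (m : ℕ) (κ : Fin s → ZMod m) (f g : MvPolynomial (Fin s) K) :
    sig m κ (f + g) = sig m κ f + sig m κ g := by
  classical
  rw [sig_eq_sum_subset m κ (f := f + g) (U := f.support ∪ g.support)
      (MvPolynomial.support_add),
    sig_eq_sum_subset m κ (U := f.support ∪ g.support) Finset.subset_union_left,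
    sig_eq_sum_subset m κ (U := f.support ∪ g.support) Finset.subset_union_right,
    ← Finset.sum_add_distrib]
  refine Finset.sum_congr rfl fun a _ => ?_
  by_cases h : clsv m a = κ
  · simp [h, coeff_add]
  · simp [h]

lemma sig_neg (m : ℕ) (κ : Fin s → ZMod m) (f : MvPolynomial (Fin s) K) :
    sig m κ (-f) = -sig m κ f := by
  rw [sig, sig, MvPolynomial.support_neg, ← Finset.sum_neg_distrib]
  refine Finset.sum_congr rfl fun a _ => ?_
  by_cases h : clsv m a = κ
  · simp [h, coeff_neg]
  · simp [h]

lemma sig_sub (m : ℕ) (κ : Fin s → ZMod m) (f g : MvPolynomial (Fin s) K) :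
    sig m κ (f - g) = sig m κ f - sig m κ g := by
  rw [sub_eq_add_neg, sig_add, sig_neg, sub_eq_add_neg]

lemma sig_zero (m : ℕ) (κ : Fin s → ZMod m) : sig m κ (0 : MvPolynomial (Fin s) K) = 0 := by
  simp [sig]

lemma sig_monomial (m : ℕ) (κ : Fin s → ZMod m) (a : Fin s →₀ ℕ) (c : K) :
    sig m κ (monomial a c) = if clsv m a = κ then c else 0 := by
  classical
  by_cases hc : c = 0
  · simp [sig, hc]
  · rw [sig, support_monomial, if_neg hc]
    rw [Finset.sum_singleton, coeff_monomial, if_pos rfl]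

lemma sig_mul_monomial (m : ℕ) (κ : Fin s → ZMod m) (p : MvPolynomial (Fin s) K)
    (u : Fin s →₀ ℕ) (hu : clsv m u = 0) :
    sig m κ (p * monomial u 1) = sig m κ p := by
  induction p using MvPolynomial.induction_on' with
  | monomial a c =>
    rw [monomial_mul, mul_one, sig_monomial, sig_monomial, clsv_add, hu, add_zero]
  | add p r hp hr =>
    rw [add_mul, sig_add, sig_add, hp, hr]

lemma clsv_single (m : ℕ) (i : Fin s) : clsv m (Finsupp.single i m) = 0 := by
  funext l
  simp only [clsv, Finsupp.single_apply, Pi.zero_apply]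
  by_cases h : i = l
  · rw [if_pos h]
    exact ZMod.natCast_self m
  · rw [if_neg h]
    norm_num

lemma sig_mul_binomial (m : ℕ) (κ : Fin s → ZMod m) (p : MvPolynomial (Fin s) K)
    (i k : Fin s) :
    sig m κ (p * (X i ^ m - X k ^ m)) = 0 := by
  rw [mul_sub, sig_sub, X_pow_eq_monomial, X_pow_eq_monomial,
    sig_mul_monomial m κ p _ (clsv_single m i), sig_mul_monomial m κ p _ (clsv_single m k),
    sub_self]

/- --------------------- rational to integer relations --------------------- -/

lemma exists_int_relation {v : Fin s → Fin n → ℕ}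
    (hnli : ¬ LinearIndependent ℚ fun i : Fin s => fun j : Fin n => (v i j : ℚ)) :
    ∃ c : Fin s → ℤ, (∀ j, ∑ i, c i * (v i j : ℤ) = 0) ∧ c ≠ 0 := by
  rw [Fintype.not_linearIndependent_iff] at hnli
  obtain ⟨g, hg, i₀, hi₀⟩ := hnli
  classical
  set c : Fin s → ℤ := fun i => (g i).num * ∏ k ∈ Finset.univ.erase i, ((g k).den : ℤ) with hc
  have key : ∀ i, ((c i : ℤ) : ℚ) = g i * ∏ k, ((g k).den : ℚ) := by
    intro i
    have h1 : (∏ k, ((g k).den : ℚ)) = ((g i).den : ℚ) *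
        ∏ k ∈ Finset.univ.erase i, ((g k).den : ℚ) :=
      (Finset.mul_prod_erase _ _ (Finset.mem_univ i)).symm
    have hden : ((g i).den : ℚ) ≠ 0 := by
      exact_mod_cast (g i).den_nz
    have h2 : g i * ((g i).den : ℚ) = ((g i).num : ℚ) :=
      ((div_eq_iff hden).mp (Rat.num_div_den (g i))).symm
    rw [h1, ← mul_assoc, h2, hc]
    push_cast
    ring
  refine ⟨c, ?_, ?_⟩
  · intro j
    have hgj : ∑ i, g i * (v i j : ℚ) = 0 := by
      have := congrFun hg j
      simpa [Finset.sum_apply] using this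
    have h3 : ((∑ i, c i * (v i j : ℤ) : ℤ) : ℚ) = 0 := by
      push_cast
      rw [Finset.sum_congr rfl fun i _ => by rw [key i]]
      have : ∑ i, g i * (∏ k, ((g k).den : ℚ)) * (v i j : ℚ) =
          (∑ i, g i * (v i j : ℚ)) * ∏ k, ((g k).den : ℚ) := by
        rw [Finset.sum_mul]
        exact Finset.sum_congr rfl fun i _ => by ring
      rw [this, hgj, zero_mul]
    exact_mod_cast h3
  · intro h0
    have hc0 := congrFun h0 i₀
    rw [hc] at hc0
    simp only [Pi.zero_apply] at hc0
    rcases mul_eq_zero.mp hc0 with h | h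
    · exact hi₀ (Rat.num_eq_zero.mp h)
    · rw [Finset.prod_eq_zero_iff] at h
      obtain ⟨k, _, hk⟩ := h
      exact (g k).den_nz (by exact_mod_cast hk)

lemma exists_nondvd_relation {v : Fin s → Fin n → ℕ} (m : ℕ) (hm : 2 ≤ m)
    (hrel : ∃ c : Fin s → ℤ, (∀ j, ∑ i, c i * (v i j : ℤ) = 0) ∧ c ≠ 0) :
    ∃ c : Fin s → ℤ, (∀ j, ∑ i, c i * (v i j : ℤ) = 0) ∧ c ≠ 0 ∧ ∃ i, ¬ (m : ℤ) ∣ c i := by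
  obtain ⟨c, hc, hc0⟩ := hrel
  suffices H : ∀ N : ℕ, ∀ c : Fin s → ℤ, (∑ i, (c i).natAbs) ≤ N →
      (∀ j, ∑ i, c i * (v i j : ℤ) = 0) → c ≠ 0 →
      ∃ c' : Fin s → ℤ, (∀ j, ∑ i, c' i * (v i j : ℤ) = 0) ∧ c' ≠ 0 ∧
        ∃ i, ¬ (m : ℤ) ∣ c' i by
    exact H _ c le_rfl hc hc0
  intro N
  induction N with
  | zero =>
    intro c hN hrel h0
    exfalso
    apply h0
    funext i
    have : (c i).natAbs = 0 := by
      have h1 : (c i).natAbs ≤ ∑ i, (c i).natAbs :=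
        Finset.single_le_sum (f := fun i => (c i).natAbs) (fun _ _ => Nat.zero_le _)
          (Finset.mem_univ i)
      omega
    simpa using Int.natAbs_eq_zero.mp this
  | succ N ih =>
    intro c hN hrel h0
    by_cases hdvd : ∀ i, (m : ℤ) ∣ c i
    · set c' : Fin s → ℤ := fun i => c i / m with hc'
      have hceq : ∀ i, c i = m * c' i := fun i => (Int.mul_ediv_cancel' (hdvd i)).symm
      have hrel' : ∀ j, ∑ i, c' i * (v i j : ℤ) = 0 := by
        intro j
        have h1 : ∑ i, c i * (v i j : ℤ) = (m : ℤ) * ∑ i, c' i * (v i j : ℤ) := by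
          rw [Finset.mul_sum]
          exact Finset.sum_congr rfl fun i _ => by rw [hceq i]; ring
        have h2 := hrel j
        rw [h1] at h2
        have hm0 : (m : ℤ) ≠ 0 := by positivity
        exact (mul_eq_zero.mp h2).resolve_left hm0
      have h0' : c' ≠ 0 := by
        intro h
        apply h0
        funext i
        rw [hceq i, congrFun h i]
        simp
      have hlt : (∑ i, (c' i).natAbs) ≤ N := by
        have h1 : ∀ i, (c i).natAbs = m * (c' i).natAbs := by
          intro i
          rw [hceq i, Int.natAbs_mul]
          simp
        have h2 : ∑ i, (c i).natAbs = m * ∑ i, (c' i).natAbs := by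
          rw [Finset.mul_sum]
          exact Finset.sum_congr rfl fun i _ => h1 i
        have h3 : 1 ≤ ∑ i, (c' i).natAbs := by
          by_contra h4
          push_neg at h4
          apply h0'
          funext i
          have h5 : (c' i).natAbs ≤ ∑ i, (c' i).natAbs :=
            Finset.single_le_sum (f := fun i => (c' i).natAbs) (fun _ _ => Nat.zero_le _)
              (Finset.mem_univ i)
          have : (c' i).natAbs = 0 := by omega
          simpa using Int.natAbs_eq_zero.mp this
        have h4 : 2 * (∑ i, (c' i).natAbs) ≤ m * ∑ i, (c' i).natAbs :=
          Nat.mul_le_mul_right _ hm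
        rw [h2] at hN
        omega
      exact ih c' hlt hrel' h0'
    · push_neg at hdvd
      exact ⟨c, hrel, h0, hdvd⟩

/-- The main argument, phrased for `s = s' + 1`. -/
theorem false_of_ci {K : Type*} [Field K] [Fintype K] {q n s' : ℕ}
    (hq : Fintype.card K = q) (hq3 : 3 ≤ q) (hs : 2 ≤ s' + 1)
    (v : Fin (s' + 1) → Fin n → ℕ) (hv : IsClutter v)
    (hunif : ∀ i k : Fin (s' + 1), ∑ j, v i j = ∑ j, v k j)
    (hci : IsCompleteIntersection (vanishingIdeal K (toricSet K v)))
    (hnla : ¬ LinearIndependent ℚ (fun i : Fin (s' + 1) => fun j : Fin n => (v i j : ℚ)))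
    (hs'1 : 1 ≤ s') : False := by
  classical
  set m : ℕ := q - 1 with hmdef
  have hm2 : 2 ≤ m := by omega
  haveI : NeZero m := ⟨by omega⟩
  have hs1 : 0 < s' + 1 := by omega
  -- an integer relation with an entry not divisible by m
  obtain ⟨c, hrel, hc0, i₁, hndvd⟩ :=
    exists_nondvd_relation m hm2 (exists_int_relation hnla)
  -- every edge is nonempty
  have hrows : ∀ i : Fin (s' + 1), ∃ j, v i j ≠ 0 := by
    intro i
    have hex : ∃ k : Fin (s' + 1), k ≠ i := by
      by_cases h0 : i = ⟨0, hs1⟩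
      · exact ⟨⟨1, by omega⟩, by rw [h0]; intro h; exact absurd (congrArg Fin.val h) (by simp)⟩
      · exact ⟨⟨0, hs1⟩, fun h => h0 h.symm⟩
    obtain ⟨k, hk⟩ := hex
    obtain ⟨j, hj1, _⟩ := hv.2 i k (Ne.symm hk)
    exact ⟨j, hj1⟩
  -- the coefficients sum to zero
  have hsum0 : ∑ i, c i = 0 := by
    set i₀ : Fin (s' + 1) := ⟨0, hs1⟩
    set M : ℕ := ∑ j, v i₀ j with hM
    have hMpos : 0 < M := by
      obtain ⟨j, hj⟩ := hrows i₀
      have h1 : v i₀ j ≤ M := Finset.single_le_sum (f := fun j => v i₀ j)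
        (fun _ _ => Nat.zero_le _) (Finset.mem_univ j)
      omega
    have hMc : (∑ i, c i) * (M : ℤ) = 0 := by
      calc (∑ i, c i) * (M : ℤ) = ∑ i, c i * (M : ℤ) := by rw [Finset.sum_mul]
        _ = ∑ i, ∑ j, c i * (v i j : ℤ) := by
            refine Finset.sum_congr rfl fun i _ => ?_
            have h2 : (M : ℤ) = ∑ j, (v i j : ℤ) := by
              rw [hM]
              exact_mod_cast hunif i₀ i
            rw [h2, Finset.mul_sum]
        _ = ∑ j, ∑ i, c i * (v i j : ℤ) := Finset.sum_comm
        _ = 0 := Finset.sum_eq_zero fun j _ => hrel j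
    have hM0 : (M : ℤ) ≠ 0 := by exact_mod_cast hMpos.ne'
    exact (mul_eq_zero.mp hMc).resolve_right hM0
  -- positive and negative parts of c
  set cp : Fin (s' + 1) → ℕ := fun i => (c i).toNat with hcp
  set cm : Fin (s' + 1) → ℕ := fun i => (-(c i)).toNat with hcm
  have hcpm : ∀ i, (cp i : ℤ) - (cm i : ℤ) = c i := fun i => by
    simp only [hcp, hcm]
    omega
  have hVrel : ∀ j, ∑ i, cp i * v i j = ∑ i, cm i * v i j := by
    intro j
    have h2 : ((∑ i, cp i * v i j : ℕ) : ℤ) = ((∑ i, cm i * v i j : ℕ) : ℤ) := by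
      push_cast
      have h3 : ∑ i, ((cp i : ℤ) - (cm i : ℤ)) * (v i j : ℤ) = 0 := by
        rw [Finset.sum_congr rfl fun i _ => by rw [hcpm i]]
        exact hrel j
      have h4 : ∑ i, ((cp i : ℤ) - (cm i : ℤ)) * (v i j : ℤ) =
          (∑ i, (cp i : ℤ) * (v i j : ℤ)) - ∑ i, (cm i : ℤ) * (v i j : ℤ) := by
        rw [← Finset.sum_sub_distrib]
        exact Finset.sum_congr rfl fun i _ => by ring
      rw [h4] at h3
      linarith
    exact_mod_cast h2
  have hdeg_eq : ∑ i, cp i = ∑ i, cm i := by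
    have h2 : ((∑ i, cp i : ℕ) : ℤ) = ((∑ i, cm i : ℕ) : ℤ) := by
      push_cast
      have h3 : ∑ i, ((cp i : ℤ) - (cm i : ℤ)) = 0 := by
        rw [Finset.sum_congr rfl fun i _ => hcpm i]
        exact hsum0
      rw [Finset.sum_sub_distrib] at h3
      linarith
    exact_mod_cast h2
  -- the two exponent vectors have different classes mod m
  set CP : Fin (s' + 1) →₀ ℕ := Finsupp.equivFunOnFinite.symm cp with hCP
  set CM : Fin (s' + 1) →₀ ℕ := Finsupp.equivFunOnFinite.symm cm with hCM
  have hclsne : clsv m CM ≠ clsv m CP := by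
    intro hcls
    apply hndvd
    have h1 : ((cm i₁ : ℕ) : ZMod m) = ((cp i₁ : ℕ) : ZMod m) := by
      have := congrFun hcls i₁
      simpa [clsv, hCM, hCP] using this
    have h2 : ((c i₁ : ℤ) : ZMod m) = 0 := by
      have h3 : (((cp i₁ : ℤ) - (cm i₁ : ℤ) : ℤ) : ZMod m) = 0 := by
        push_cast
        rw [← h1]
        ring
      rwa [hcpm i₁] at h3
    exact (ZMod.intCast_zmod_eq_zero_iff_dvd _ _).mp h2
  -- the binomial b associated to the relation
  set D : ℕ := ∑ i, cp i with hD
  have hCPhom : (monomial CP (1 : K)).IsHomogeneous D :=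
    MvPolynomial.isHomogeneous_monomial _ (by
      rw [hCP, degree_equivFunOnFinite_symm, hD])
  have hCMhom : (monomial CM (1 : K)).IsHomogeneous D :=
    MvPolynomial.isHomogeneous_monomial _ (by
      rw [hCM, degree_equivFunOnFinite_symm]
      exact hdeg_eq.symm)
  set b : MvPolynomial (Fin (s' + 1)) K := monomial CP 1 - monomial CM 1 with hb
  have hbhom : b.IsHomogeneous D := hCPhom.sub hCMhom
  have hbmem : b ∈ vanishingIdeal K (toricSet K v) := by
    apply mem_vanishingIdeal_of_eval_wv hs1 hbhom
    intro x hx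
    rw [hb, map_sub, hCP, hCM, eval_monomial_symm, eval_monomial_symm]
    have hwv : ∀ (e : Fin (s' + 1) → ℕ),
        ∏ i, wv v x i ^ e i = ∏ j, x j ^ ∑ i, e i * v i j := fun e =>
      prod_prod_pow x v e
    rw [hwv cp, hwv cm, Finset.prod_congr rfl fun j _ => by rw [hVrel j], sub_self]
  -- the torus binomials G
  set lastI : Fin (s' + 1) := Fin.last s' with hlastI
  set G : Fin s' → MvPolynomial (Fin (s' + 1)) K :=
    fun i => X i.castSucc ^ m - X lastI ^ m with hG
  have hGhom : ∀ i, (G i).IsHomogeneous m := fun i =>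
    (MvPolynomial.isHomogeneous_X_pow _ _).sub (MvPolynomial.isHomogeneous_X_pow _ _)
  have hFermat : ∀ (x : Fin n → K), (∀ j, x j ≠ 0) → ∀ a : Fin (s' + 1),
      (wv v x a) ^ m = 1 := by
    intro x hx a
    have h1 := FiniteField.pow_card_sub_one_eq_one (wv (K := K) v x a)
      (wv_apply_ne_zero hx a)
    rw [hq] at h1
    rw [hmdef]
    exact h1
  have hGmem : ∀ i, G i ∈ vanishingIdeal K (toricSet K v) := by
    intro i
    apply mem_vanishingIdeal_of_eval_wv hs1 (hGhom i)
    intro x hx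
    rw [hG]
    simp only [map_sub, map_pow, eval_X]
    rw [hFermat x hx, hFermat x hx, sub_self]
  -- unpack the complete intersection hypothesis
  obtain ⟨g, hgdeg, hgspan⟩ := hci
  choose dg hdg using hgdeg
  -- the images under the substitution t_i ↦ y^{v_i}
  set θ : Fin s' → MvPolynomial (Fin n) K :=
    fun j => aeval (YY K v) (g j) with hθ
  set EE : Fin (s' + 1) → (Fin n →₀ ℕ) :=
    fun a => Finsupp.equivFunOnFinite.symm fun j => m * v a j with hEE
  set uu : Fin s' → MvPolynomial (Fin n) K :=
    fun i => monomial (EE i.castSucc) 1 - monomial (EE lastI) 1 with huu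
  have hXm : ∀ a : Fin (s' + 1),
      aeval (YY K v) ((X a : MvPolynomial (Fin (s' + 1)) K) ^ m) =
        monomial (EE a) 1 := by
    intro a
    rw [X_pow_eq_monomial, aeval_YY_monomial]
    have hfun : (fun j => ∑ i, (Finsupp.single a m) i * v i j) = fun j => m * v a j := by
      funext j
      rw [Finset.sum_eq_single a]
      · simp
      · intro bb _ hbb
        rw [Finsupp.single_eq_of_ne hbb, zero_mul]
      · intro h; exact absurd (Finset.mem_univ a) h
    rw [hfun]
  have hGaeval : ∀ i, aeval (YY K v) (G i) = uu i := by
    intro i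
    rw [hG, map_sub, hXm, hXm, huu]
  -- the generators belong to the vanishing ideal and vanish on the toric set
  have hgmem : ∀ j, g j ∈ vanishingIdeal K (toricSet K v) := by
    intro j
    rw [← hgspan]
    exact Ideal.subset_span (Set.mem_range_self j)
  have hθlow : ∀ j, dg j < m → aeval (YY K v) (g j) = 0 := by
    intro j hj
    refine aeval_YY_eq_zero hq hv.1 (by omega : dg j < q - 1) (hdg j) ?_
    exact fun x hx => eval_wv_eq_zero_of_mem hs1 (hdg j) (hgmem j) hx
  -- the key spanning property
  set Tm : Finset (Fin s') := Finset.univ.filter (fun j => dg j = m) with hTmdef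
  have hTmmem : ∀ i : Fin s', uu i ∈ Submodule.span K (θ '' (Tm : Set (Fin s'))) := by
    intro i
    obtain ⟨h, hh⟩ := Ideal.mem_span_range_iff_exists_fun.mp
      (show G i ∈ Ideal.span (Set.range g) by rw [hgspan]; exact hGmem i)
    have hcomp := congrArg (homogeneousComponent m) hh
    rw [map_sum, Finset.sum_congr rfl (fun j _ =>
        homogeneousComponent_mul_isHomogeneous (hdg j) (h j) m),
      homogeneousComponent_of_mem ((mem_homogeneousSubmodule _ _).mpr (hGhom i)),
      if_pos rfl] at hcomp
    have haeval := congrArg (aeval (YY K v)) hcomp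
    rw [map_sum, hGaeval i] at haeval
    have hterm : ∀ j, aeval (YY K v)
        (if dg j ≤ m then homogeneousComponent (m - dg j) (h j) * g j else 0) =
        if dg j = m then (coeff 0 (h j)) • θ j else 0 := by
      intro j
      rcases lt_trichotomy (dg j) m with hlt | heq | hgt
      · rw [if_pos hlt.le, if_neg (by omega : ¬ dg j = m), map_mul, hθlow j hlt, mul_zero]
      · rw [if_pos heq.le, if_pos heq, heq, Nat.sub_self, homogeneousComponent_zero,
          map_mul, aeval_C, hθ, Algebra.smul_def]
      · rw [if_neg (by omega), if_neg (by omega), map_zero]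
    rw [Finset.sum_congr rfl fun j _ => hterm j, ← Finset.sum_filter] at haeval
    rw [← haeval]
    refine Submodule.sum_mem _ fun j hj => Submodule.smul_mem _ _ ?_
    exact Submodule.subset_span ⟨j, by simpa [hTmdef] using hj, rfl⟩
  -- linear independence of the uu and the counting argument
  have hEEinj : Function.Injective EE := by
    intro a bb hab
    by_contra hne
    obtain ⟨j, hj1, hj2⟩ := hv.2 a bb hne
    have h1 : m * v a j = m * v bb j := by
      have := congrArg (fun F => F j) hab
      simpa [hEE] using this
    rw [hj2, Nat.mul_zero, Nat.mul_eq_zero] at h1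
    rcases h1 with h | h
    · omega
    · exact hj1 h
  have hlastne : ∀ i : Fin s', EE lastI ≠ EE i.castSucc := fun i h =>
    (Fin.castSucc_lt_last i).ne' (hEEinj h)
  have hliuu : LinearIndependent K uu := by
    rw [Fintype.linearIndependent_iff]
    intro lam hlam i
    have h1 := congrArg (coeff (EE i.castSucc)) hlam
    rw [coeff_zero, coeff_sum] at h1
    have h2 : ∀ k : Fin s', coeff (EE i.castSucc) (lam k • uu k) =
        if k = i then lam i else 0 := by
      intro k
      rw [huu]
      simp only [smul_sub, coeff_sub, coeff_smul, coeff_monomial, smul_eq_mul]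
      by_cases hk : k = i
      · subst hk
        rw [if_pos rfl, if_neg (hlastne k), if_pos rfl]
        ring
      · rw [if_neg (fun hEq => hk (Fin.castSucc_injective _ (hEEinj hEq))),
          if_neg (hlastne i), if_neg hk]
        ring
    rw [Finset.sum_congr rfl fun k _ => h2 k] at h1
    simpa using h1
  -- a family spanning all the uu's must have at least s' elements
  have hcontra : ∀ T : Finset (Fin s'),
      (∀ i, uu i ∈ Submodule.span K (θ '' (T : Set (Fin s')))) → s' ≤ T.card := by
    intro T hT
    by_contra hcard
    push_neg at hcard
    set W := Submodule.span K (θ '' (T : Set (Fin s'))) with hW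
    haveI : FiniteDimensional K W :=
      FiniteDimensional.span_of_finite K ((T : Set (Fin s')).toFinite.image θ)
    set uuW : Fin s' → W := fun i => ⟨uu i, hT i⟩ with huuW
    have hliW : LinearIndependent K uuW := by
      apply LinearIndependent.of_comp W.subtype
      exact hliuu
    have hge : s' ≤ Module.finrank K W := by
      have h1 := hliW.fintype_card_le_finrank
      simpa using h1
    have hle2 : Module.finrank K W ≤ T.card := by
      have h1 : θ '' (T : Set (Fin s')) =
          ((T.image θ : Finset (MvPolynomial (Fin n) K)) : Set (MvPolynomial (Fin n) K)) :=
        (Finset.coe_image).symm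
      have h2 : Module.finrank K W ≤ (T.image θ).card := by
        rw [hW, h1]
        exact finrank_span_finset_le_card _
      exact h2.trans Finset.card_image_le
    omega
  -- all generators have degree exactly m
  have hTm_univ : ∀ j, dg j = m := by
    have h1 := hcontra Tm hTmmem
    have h2 : Tm = Finset.univ := by
      apply Finset.eq_univ_of_card
      have h3 := Finset.card_le_univ Tm
      simp only [Finset.card_univ, Fintype.card_fin] at h3 ⊢
      omega
    intro j
    have h3 : j ∈ Tm := h2 ▸ Finset.mem_univ j
    rw [hTmdef] at h3
    exact (Finset.mem_filter.mp h3).2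
  -- all generators are nonzero
  have hgnz : ∀ j, g j ≠ 0 := by
    intro j0 hj0
    have hzero : θ j0 = 0 := by
      simp only [hθ]
      rw [hj0, map_zero]
    have hT' : ∀ i, uu i ∈ Submodule.span K
        (θ '' ((Finset.univ.erase j0 : Finset (Fin s')) : Set (Fin s'))) := by
      intro i
      have h1 := hTmmem i
      have h2 : θ '' (Tm : Set (Fin s')) ⊆
          insert (0 : MvPolynomial (Fin n) K)
            (θ '' ((Finset.univ.erase j0 : Finset (Fin s')) : Set (Fin s'))) := by
        rintro _ ⟨k, _, rfl⟩
        by_cases hkj : k = j0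
        · subst hkj
          rw [hzero]
          exact Set.mem_insert _ _
        · exact Set.mem_insert_of_mem _ ⟨k, by simp [hkj], rfl⟩
      have h3 := Submodule.span_mono h2 h1
      rwa [Submodule.span_insert_zero] at h3
    have h4 := hcontra _ hT'
    have h5 : (Finset.univ.erase j0).card = s' - 1 := by
      rw [Finset.card_erase_of_mem (Finset.mem_univ _), Finset.card_univ, Fintype.card_fin]
      omega
    omega
  -- the K-span of the generators equals the K-span of the torus binomials
  have hGrep : ∀ i : Fin s', ∃ lam : Fin s' → K, G i = ∑ j, lam j • g j := by
    intro i
    obtain ⟨h, hh⟩ := Ideal.mem_span_range_iff_exists_fun.mp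
      (show G i ∈ Ideal.span (Set.range g) by rw [hgspan]; exact hGmem i)
    have hcomp := congrArg (homogeneousComponent m) hh
    rw [map_sum, Finset.sum_congr rfl (fun j _ =>
        homogeneousComponent_mul_isHomogeneous (hdg j) (h j) m),
      homogeneousComponent_of_mem ((mem_homogeneousSubmodule _ _).mpr (hGhom i)),
      if_pos rfl] at hcomp
    refine ⟨fun j => coeff 0 (h j), ?_⟩
    rw [← hcomp]
    refine (Finset.sum_congr rfl fun j _ => ?_).symm
    rw [if_pos (by rw [hTm_univ j]), hTm_univ j, Nat.sub_self, homogeneousComponent_zero,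
      C_mul']
  have hGspanle : Submodule.span K (Set.range G) ≤ Submodule.span K (Set.range g) := by
    rw [Submodule.span_le]
    rintro _ ⟨i, rfl⟩
    obtain ⟨lam, hlam⟩ := hGrep i
    rw [hlam]
    exact Submodule.sum_mem _ fun j _ =>
      Submodule.smul_mem _ _ (Submodule.subset_span (Set.mem_range_self j))
  have hsing : ∀ (a bb : Fin (s' + 1)),
      Finsupp.single a m = Finsupp.single bb m → a = bb := fun a bb h =>
    Finsupp.single_left_injective (fun h0 => by omega) h
  have hliG : LinearIndependent K G := by
    rw [Fintype.linearIndependent_iff]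
    intro lam hlam i
    have h1 := congrArg (coeff (Finsupp.single i.castSucc m)) hlam
    rw [coeff_zero, coeff_sum] at h1
    have h2 : ∀ k : Fin s', coeff (Finsupp.single i.castSucc m) (lam k • G k) =
        if k = i then lam i else 0 := by
      intro k
      rw [hG]
      simp only [X_pow_eq_monomial, smul_sub, coeff_sub, coeff_smul, coeff_monomial,
        smul_eq_mul]
      by_cases hk : k = i
      · subst hk
        rw [if_pos rfl, if_neg (fun h => (Fin.castSucc_lt_last k).ne' (hsing _ _ h)),
          if_pos rfl]
        ring
      · rw [if_neg (fun h => hk (Fin.castSucc_injective _ (hsing _ _ h))),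
          if_neg (fun h => (Fin.castSucc_lt_last i).ne' (hsing _ _ h)), if_neg hk]
        ring
    rw [Finset.sum_congr rfl fun k _ => h2 k] at h1
    simpa using h1
  haveI : FiniteDimensional K (Submodule.span K (Set.range g)) :=
    FiniteDimensional.span_of_finite K (Set.finite_range g)
  have hEq2 : Submodule.span K (Set.range G) = Submodule.span K (Set.range g) := by
    apply Submodule.eq_of_le_of_finrank_le hGspanle
    have h1 : Module.finrank K (Submodule.span K (Set.range G)) = s' := by
      rw [finrank_span_eq_card hliG, Fintype.card_fin]
    have h2 : Module.finrank K (Submodule.span K (Set.range g)) ≤ s' := by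
      have h3 : Set.range g =
          ((Finset.univ.image g : Finset (MvPolynomial (Fin (s' + 1)) K)) : Set _) := by
        rw [Finset.coe_image, Finset.coe_univ, Set.image_univ]
      rw [h3]
      refine (finrank_span_finset_le_card _).trans ?_
      refine Finset.card_image_le.trans ?_
      rw [Finset.card_univ, Fintype.card_fin]
      omega
    rw [h1]
    exact h2
  have hIle : vanishingIdeal K (toricSet K v) ≤ Ideal.span (Set.range G) := by
    rw [← hgspan, Ideal.span_le]
    intro a ha
    have h1 : a ∈ Submodule.span K (Set.range G) := by
      rw [hEq2]
      exact Submodule.subset_span ha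
    have h2 : Submodule.span K (Set.range G) ≤
        (Ideal.span (Set.range G)).restrictScalars K :=
      Submodule.span_le.mpr fun bb hbb => Ideal.subset_span hbb
    exact h2 h1
  -- final contradiction via the σ functional
  obtain ⟨p, hp⟩ := Ideal.mem_span_range_iff_exists_fun.mp (hIle hbmem)
  set κ : Fin (s' + 1) → ZMod m := clsv m CP with hκ
  have hσsum : ∀ T : Finset (Fin s'), sig m κ (∑ j ∈ T, p j * G j) = 0 := by
    intro T
    induction T using Finset.cons_induction with
    | empty => rw [Finset.sum_empty]; exact sig_zero m κ
    | cons a T ha ih =>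
      rw [Finset.sum_cons, sig_add, ih, add_zero, hG]
      exact sig_mul_binomial m κ (p a) _ _
  have hσb0 : sig m κ b = 0 := by
    rw [← hp]
    exact hσsum Finset.univ
  have hσb1 : sig m κ b = 1 := by
    rw [hb, sig_sub, sig_monomial, sig_monomial,
      if_pos (by rw [hκ]), if_neg (by rw [hκ]; exact hclsne), sub_zero]
  exact zero_ne_one (hσb0.symm.trans hσb1)

end Stmt9Aux

end Stmt9Aux

/-- For a uniform clutter with characteristic vectors `v_1,…,v_s` over
`F_q` (`q ≥ 3`), if `I(X)` is a complete intersection then `v_1,…,v_s` are linearly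
independent over `ℚ`. -/
theorem stmt9 {K : Type*} [Field K] [Fintype K] {q n s : ℕ}
    (hq : Fintype.card K = q) (hq3 : 3 ≤ q) (hs : 2 ≤ s)
    (v : Fin s → Fin n → ℕ) (hv : IsClutter v)
    (hunif : ∀ i k : Fin s, ∑ j, v i j = ∑ j, v k j)
    (hci : IsCompleteIntersection (vanishingIdeal K (toricSet K v))) :
    LinearIndependent ℚ (fun i : Fin s => fun j : Fin n => (v i j : ℚ)) := by
  by_contra hnla
  obtain ⟨s', rfl⟩ : ∃ s', s = s' + 1 := ⟨s - 1, by omega⟩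
  exact Stmt9Aux.false_of_ci hq hq3 hs v hv hunif hci hnla (by omega)
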